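/- (Heat equation.) Let f : ℝ → ℝ be continuous and of polynomial growth, and set u(t,x) = P_t f(x) for t > 0, x ∈ ℝ. Then for every t > 0 and x ∈ ℝ the partial derivatives ∂u/∂t(t,x) and ∂²u/∂x²(t,x) exist and satisfy ∂u/∂t(t,x) = (1/2)·∂²u/∂x²(t,x). -/

import Mathlib

open MeasureTheory

/-- The heat kernel `p_t(x) = (1/√(2πt)) e^{−x²/(2t)}`. -/
noncomputable def heatKernel (t x : ℝ) : ℝ :=
  (Real.sqrt (2 * Real.pi * t))⁻¹ * Real.exp (-x ^ 2 / (2 * t))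

/-- The heat semigroup `P_t f(x) = ∫_ℝ p_t(x−y) f(y) dy`. -/
noncomputable def heatSemigroup (t : ℝ) (f : ℝ → ℝ) (x : ℝ) : ℝ :=
  ∫ y, heatKernel t (x - y) * f y

/-- `f` is of polynomial growth: `|f(x)| ≤ C(1 + |x|^k)` for some `C ≥ 0`, `k ∈ ℕ`. -/
def PolyGrowth (f : ℝ → ℝ) : Prop :=
  ∃ C : ℝ, ∃ k : ℕ, 0 ≤ C ∧ ∀ x : ℝ, |f x| ≤ C * (1 + |x| ^ k)

open Real Set


lemma integrable_abs_pow_mul_exp {b : ℝ} (hb : 0 < b) (n : ℕ) :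
    Integrable fun x : ℝ => |x| ^ n * Real.exp (-b * x ^ 2) := by
  have hIoi : IntegrableOn (fun x : ℝ => |x| ^ n * Real.exp (-b * x ^ 2)) (Set.Ioi 0) := by
    refine (integrableOn_rpow_mul_exp_neg_mul_sq hb (s := n)
      (lt_of_lt_of_le (by norm_num) (Nat.cast_nonneg n))).congr_fun ?_ measurableSet_Ioi
    intro x hx
    simp only [Real.rpow_natCast, abs_of_pos (Set.mem_Ioi.1 hx)]
  have hIio : IntegrableOn (fun x : ℝ => |x| ^ n * Real.exp (-b * x ^ 2)) (Set.Iio 0) := by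
    rw [← (Measure.measurePreserving_neg (volume : Measure ℝ)).integrableOn_comp_preimage
      (Homeomorph.neg ℝ).measurableEmbedding]
    simp only [Function.comp_def, abs_neg, neg_sq, neg_preimage, neg_Iio, neg_zero]
    exact hIoi
  rw [← integrableOn_univ, ← Set.Iio_union_Ici (a := (0:ℝ)), integrableOn_union,
    integrableOn_Ici_iff_integrableOn_Ioi]
  exact ⟨hIio, hIoi⟩

lemma integrable_one_add_abs_pow_mul_exp {b : ℝ} (hb : 0 < b) (n : ℕ) :
    Integrable fun x : ℝ => (1 + |x|) ^ n * Real.exp (-b * x ^ 2) := by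
  have hmaj : Integrable fun x : ℝ =>
      (2:ℝ)^n * Real.exp (-b * x ^ 2) + (2:ℝ)^n * (|x| ^ n * Real.exp (-b * x ^ 2)) :=
    ((integrable_exp_neg_mul_sq hb).const_mul _).add
      ((integrable_abs_pow_mul_exp hb n).const_mul _)
  refine hmaj.mono' (Continuous.aestronglyMeasurable (by continuity)) ?_
  refine Filter.Eventually.of_forall fun x => ?_
  rw [Real.norm_eq_abs, abs_of_nonneg (by positivity)]
  have h1 : (1 + |x|) ^ n ≤ 2^n * (1 + |x| ^ n) := by
    have h2 : (1 + |x|) ≤ 2 * max 1 |x| := by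
      rcases le_total 1 |x| with h | h
      · rw [max_eq_right h]; linarith
      · rw [max_eq_left h]; linarith
    calc (1 + |x|) ^ n ≤ (2 * max 1 |x|) ^ n :=
          pow_le_pow_left₀ (by positivity) h2 n
      _ = 2^n * (max 1 |x|)^n := by rw [mul_pow]
      _ ≤ 2^n * (1 + |x| ^ n) := by
          gcongr
          rcases le_total 1 |x| with h | h
          · rw [max_eq_right h]
            nlinarith [pow_nonneg (abs_nonneg x) n]
          · rw [max_eq_left h, one_pow]
            nlinarith [pow_nonneg (abs_nonneg x) n]
  nlinarith [Real.exp_pos (-b * x ^ 2), pow_nonneg (abs_nonneg x) n,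
    mul_le_mul_of_nonneg_right h1 (Real.exp_pos (-b * x ^ 2)).le]

lemma heatKernel_continuous (t : ℝ) : Continuous fun x => heatKernel t x := by
  unfold heatKernel
  exact continuous_const.mul ((continuous_neg.comp (continuous_pow 2)).div_const _).rexp

lemma heatKernel_pos {t : ℝ} (ht : 0 < t) (x : ℝ) : 0 < heatKernel t x := by
  unfold heatKernel
  positivity

lemma hasDerivAt_heatKernel_space {t : ℝ} (ht : 0 < t) (z : ℝ) :
    HasDerivAt (heatKernel t) (-(z / t) * heatKernel t z) z := by
  have h1 : HasDerivAt (fun z : ℝ => -z ^ 2 / (2 * t)) (-(z / t)) z := by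
    have := ((hasDerivAt_pow 2 z).neg).div_const (2 * t)
    refine this.congr_deriv ?_
    field_simp
    ring
  have h2 := h1.exp.const_mul ((Real.sqrt (2 * Real.pi * t))⁻¹)
  refine h2.congr_deriv ?_
  unfold heatKernel
  ring

lemma hasDerivAt_heatKernel_space2 {t : ℝ} (ht : 0 < t) (z : ℝ) :
    HasDerivAt (fun z => -(z / t) * heatKernel t z)
      ((z ^ 2 / t ^ 2 - 1 / t) * heatKernel t z) z := by
  have h := (((hasDerivAt_id z).div_const t).neg).mul (hasDerivAt_heatKernel_space ht z)
  refine h.congr_deriv ?_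
  simp only [id_eq, Pi.neg_apply]
  ring

lemma hasDerivAt_heatKernel_time {t : ℝ} (ht : 0 < t) (z : ℝ) :
    HasDerivAt (fun τ => heatKernel τ z)
      ((1 / 2) * ((z ^ 2 / t ^ 2 - 1 / t) * heatKernel t z)) t := by
  have h2πt : (0:ℝ) < 2 * Real.pi * t := by positivity
  have hs : Real.sqrt (2 * Real.pi * t) ≠ 0 := (Real.sqrt_pos.2 h2πt).ne'
  have h1 : HasDerivAt (fun τ : ℝ => Real.sqrt (2 * Real.pi * τ))
      (Real.pi / Real.sqrt (2 * Real.pi * t)) t := by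
    have h0 : HasDerivAt (fun τ : ℝ => 2 * Real.pi * τ) (2 * Real.pi) t := by
      simpa using (hasDerivAt_id t).const_mul (2 * Real.pi)
    have := (Real.hasDerivAt_sqrt h2πt.ne').comp t h0
    refine this.congr_deriv ?_
    field_simp
  have h2 := h1.inv hs
  have h3 : HasDerivAt (fun τ : ℝ => -z ^ 2 / (2 * τ)) (z ^ 2 / (2 * t ^ 2)) t := by
    have h2t : (2:ℝ) * t ≠ 0 := by positivity
    have h0 : HasDerivAt (fun τ : ℝ => 2 * τ) 2 t := by
      simpa using (hasDerivAt_id t).const_mul 2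
    have := (h0.inv h2t).const_mul (-z ^ 2)
    simp only [div_eq_mul_inv]
    refine this.congr_deriv ?_
    field_simp
  have h5 := h2.mul h3.exp
  refine h5.congr_deriv ?_
  simp only [Pi.inv_apply]
  unfold heatKernel
  rw [Real.sq_sqrt h2πt.le]
  have hπ := Real.pi_ne_zero
  field_simp
  ring


lemma exp_kernel_bound {t τ x y M : ℝ} (ht : 0 < t) (hτ1 : t / 2 ≤ τ) (hτ2 : τ ≤ 3 * t / 2)
    (hx : |x| ≤ M) :
    Real.exp (-(x - y) ^ 2 / (2 * τ)) ≤
      Real.exp (M ^ 2 / t) * Real.exp (-(1 / (6 * t)) * y ^ 2) := by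
  rw [← Real.exp_add, Real.exp_le_exp]
  have hτ0 : 0 < τ := by linarith
  have hx2 : x ^ 2 ≤ M ^ 2 := by
    rw [← sq_abs]; exact pow_le_pow_left₀ (abs_nonneg x) hx 2
  have key : y ^ 2 / 2 - 2 * M ^ 2 ≤ (x - y) ^ 2 := by
    nlinarith [sq_nonneg (y - 2 * x)]
  have he : M ^ 2 / t + -(1 / (6 * t)) * y ^ 2 = (6 * M ^ 2 - y ^ 2) / (6 * t) := by
    field_simp; ring
  rw [he, div_le_div_iff₀ (by positivity) (by positivity)]
  rcases le_or_gt 0 (y ^ 2 / 2 - 2 * M ^ 2) with hA | hA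
  · nlinarith [mul_le_mul_of_nonneg_right key (by linarith : (0:ℝ) ≤ 6 * t),
      mul_nonneg (mul_nonneg (by linarith : (0:ℝ) ≤ y ^ 2 - 4 * M ^ 2) (by linarith : (0:ℝ) ≤ 2)) (sub_nonneg.2 hτ1),
      sq_nonneg y, sq_nonneg M, mul_pos ht hτ0]
  · nlinarith [sq_nonneg (x - y), mul_pos ht hτ0,
      mul_nonneg (by nlinarith [sq_nonneg M] : (0:ℝ) ≤ 6 * M ^ 2 - y ^ 2) hτ0.le,
      mul_nonneg (sq_nonneg (x - y)) ht.le]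

lemma sqrt_inv_bound {t τ : ℝ} (ht : 0 < t) (hτ1 : t / 2 ≤ τ) :
    (Real.sqrt (2 * Real.pi * τ))⁻¹ ≤ (Real.sqrt (Real.pi * t))⁻¹ := by
  have := Real.pi_pos
  apply inv_anti₀ (Real.sqrt_pos.2 (by positivity))
  apply Real.sqrt_le_sqrt
  nlinarith

lemma abs_sub_le_poly {x y M : ℝ} (hx : |x| ≤ M) : |x - y| ≤ (1 + M) * (1 + |y|) := by
  have h0 : 0 ≤ M := (abs_nonneg x).trans hx
  have h1 : |x - y| ≤ |x| + |y| := abs_sub x y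
  nlinarith [abs_nonneg y, abs_nonneg x]

lemma sq_sub_le_poly {x y M : ℝ} (hx : |x| ≤ M) :
    (x - y) ^ 2 ≤ (1 + M) ^ 2 * (1 + |y|) ^ 2 := by
  rw [← mul_pow, ← sq_abs (x - y)]
  exact pow_le_pow_left₀ (abs_nonneg _) (abs_sub_le_poly hx) 2

lemma poly_f_bound {f : ℝ → ℝ} {C : ℝ} {k : ℕ} (hC : 0 ≤ C)
    (hfb : ∀ x, |f x| ≤ C * (1 + |x| ^ k)) (y : ℝ) :
    |f y| ≤ 2 * C * (1 + |y|) ^ k := by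
  have h1 : |y| ^ k ≤ (1 + |y|) ^ k :=
    pow_le_pow_left₀ (abs_nonneg y) (by linarith [abs_nonneg y]) k
  have h2 : (1:ℝ) ≤ (1 + |y|) ^ k := one_le_pow₀ (by linarith [abs_nonneg y])
  calc |f y| ≤ C * (1 + |y| ^ k) := hfb y
    _ ≤ 2 * C * (1 + |y|) ^ k := by nlinarith

lemma coeff_bound {t τ x y M : ℝ} (ht : 0 < t) (hτ1 : t / 2 ≤ τ) (hτ2 : τ ≤ 3 * t / 2)
    (hx : |x| ≤ M) :
    |(x - y) ^ 2 / τ ^ 2 - 1 / τ| ≤ (4 * (1 + M) ^ 2 / t ^ 2 + 2 / t) * (1 + |y|) ^ 2 := by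
  have hτ0 : 0 < τ := by linarith
  have hM : 0 ≤ M := (abs_nonneg x).trans hx
  have h1 : |(x - y) ^ 2 / τ ^ 2 - 1 / τ| ≤ (x - y) ^ 2 / τ ^ 2 + 1 / τ := by
    refine (abs_sub _ _).trans ?_
    rw [abs_of_nonneg (by positivity), abs_of_nonneg (by positivity)]
  have hτsq : t ^ 2 ≤ 4 * τ ^ 2 := by nlinarith
  have h2 : (x - y) ^ 2 / τ ^ 2 ≤ 4 * ((1 + M) ^ 2 * (1 + |y|) ^ 2) / t ^ 2 := by
    rw [div_le_div_iff₀ (by positivity) (by positivity)]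
    nlinarith [mul_le_mul (sq_sub_le_poly hx) hτsq (by positivity)
      (by positivity : (0:ℝ) ≤ (1 + M) ^ 2 * (1 + |y|) ^ 2)]
  have h3 : 1 / τ ≤ 2 / t := by
    rw [div_le_div_iff₀ hτ0 ht]; linarith
  have h4 : (1:ℝ) ≤ (1 + |y|) ^ 2 := one_le_pow₀ (by linarith [abs_nonneg y])
  have h5 : (0:ℝ) ≤ 2 / t := by positivity
  calc |(x - y) ^ 2 / τ ^ 2 - 1 / τ| ≤ (x - y) ^ 2 / τ ^ 2 + 1 / τ := h1
    _ ≤ 4 * ((1 + M) ^ 2 * (1 + |y|) ^ 2) / t ^ 2 + 2 / t := by linarith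
    _ ≤ (4 * (1 + M) ^ 2 / t ^ 2 + 2 / t) * (1 + |y|) ^ 2 := by
        have e : 4 * ((1 + M) ^ 2 * (1 + |y|) ^ 2) / t ^ 2
            = 4 * (1 + M) ^ 2 / t ^ 2 * (1 + |y|) ^ 2 := by ring
        nlinarith [mul_nonneg h5 (by linarith : (0:ℝ) ≤ (1 + |y|) ^ 2 - 1)]

section Main

variable {f : ℝ → ℝ} {C : ℝ} {k : ℕ}

lemma integrable_kernel_mul (hf : Continuous f) (hC : 0 ≤ C)
    (hfb : ∀ x, |f x| ≤ C * (1 + |x| ^ k)) {t : ℝ} (ht : 0 < t) (x : ℝ) :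
    Integrable fun y => heatKernel t (x - y) * f y := by
  refine Integrable.mono'
    (g := fun y => ((Real.sqrt (2 * Real.pi * t))⁻¹ * Real.exp (|x| ^ 2 / t) * (2 * C)) *
      ((1 + |y|) ^ k * Real.exp (-(1 / (6 * t)) * y ^ 2)))
    ((integrable_one_add_abs_pow_mul_exp (by positivity) k).const_mul _)
    (Continuous.aestronglyMeasurable
      (((heatKernel_continuous t).comp (continuous_const.sub continuous_id)).mul hf))
    (Filter.Eventually.of_forall fun y => ?_)
  rw [Real.norm_eq_abs, abs_mul, abs_of_pos (heatKernel_pos ht _)]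
  unfold heatKernel
  calc (Real.sqrt (2 * Real.pi * t))⁻¹ * Real.exp (-(x - y) ^ 2 / (2 * t)) * |f y|
      ≤ (Real.sqrt (2 * Real.pi * t))⁻¹ *
          (Real.exp (|x| ^ 2 / t) * Real.exp (-(1 / (6 * t)) * y ^ 2)) *
          (2 * C * (1 + |y|) ^ k) := by
        gcongr
        · exact exp_kernel_bound ht (by linarith) (by linarith) le_rfl
        · exact poly_f_bound hC hfb y
    _ = _ := by ring

lemma prop1 (hf : Continuous f) (hC : 0 ≤ C)
    (hfb : ∀ x, |f x| ≤ C * (1 + |x| ^ k)) {t : ℝ} (ht : 0 < t) (x₀ : ℝ) :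
    Integrable (fun y => (-((x₀ - y) / t) * heatKernel t (x₀ - y)) * f y) ∧
    HasDerivAt (fun x => heatSemigroup t f x)
      (∫ y, (-((x₀ - y) / t) * heatKernel t (x₀ - y)) * f y) x₀ := by
  set M := |x₀| + 1 with hMdef
  have hM : ∀ x ∈ Metric.ball x₀ (1:ℝ), |x| ≤ M := by
    intro x hx
    have h := mem_ball_iff_norm.1 hx
    rw [Real.norm_eq_abs] at h
    calc |x| = |x₀ + (x - x₀)| := by congr 1; ring
      _ ≤ |x₀| + |x - x₀| := abs_add_le _ _
      _ ≤ M := by rw [hMdef]; linarith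
  simp only [heatSemigroup]
  exact hasDerivAt_integral_of_dominated_loc_of_deriv_le
    (F := fun x y => heatKernel t (x - y) * f y)
    (F' := fun x y => (-((x - y) / t) * heatKernel t (x - y)) * f y)
    (bound := fun y => ((1 + M) / t * (Real.sqrt (2 * Real.pi * t))⁻¹ *
      Real.exp (M ^ 2 / t) * (2 * C)) *
      ((1 + |y|) ^ (k + 1) * Real.exp (-(1 / (6 * t)) * y ^ 2)))
    (Metric.ball_mem_nhds x₀ one_pos)
    (Filter.Eventually.of_forall fun x => Continuous.aestronglyMeasurable
      (((heatKernel_continuous t).comp (continuous_const.sub continuous_id)).mul hf))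
    (integrable_kernel_mul hf hC hfb ht x₀)
    (Continuous.aestronglyMeasurable
      ((((continuous_const.sub continuous_id).div_const t).neg.mul
        ((heatKernel_continuous t).comp (continuous_const.sub continuous_id))).mul hf))
    (Filter.Eventually.of_forall fun y => fun x hx => by
      have hxM := hM x hx
      rw [Real.norm_eq_abs, abs_mul, abs_mul, abs_neg, abs_div, abs_of_pos ht,
        abs_of_pos (heatKernel_pos ht _)]
      unfold heatKernel
      calc |x - y| / t *
            ((Real.sqrt (2 * Real.pi * t))⁻¹ * Real.exp (-(x - y) ^ 2 / (2 * t))) * |f y|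
          ≤ (1 + M) * (1 + |y|) / t *
              ((Real.sqrt (2 * Real.pi * t))⁻¹ *
                (Real.exp (M ^ 2 / t) * Real.exp (-(1 / (6 * t)) * y ^ 2))) *
              (2 * C * (1 + |y|) ^ k) := by
            gcongr
            · exact abs_sub_le_poly hxM
            · exact exp_kernel_bound ht (by linarith) (by linarith) hxM
            · exact poly_f_bound hC hfb y
        _ = _ := by ring)
    (((integrable_one_add_abs_pow_mul_exp (by positivity : (0:ℝ) < 1/(6*t)) (k+1)).const_mul _))
    (Filter.Eventually.of_forall fun y => fun x hx => by
      have h := ((hasDerivAt_heatKernel_space ht (x - y)).comp x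
        ((hasDerivAt_id x).sub_const y)).mul_const (f y)
      simpa using h)

end Main

section Main2
variable {f : ℝ → ℝ} {C : ℝ} {k : ℕ}

lemma prop2 (hf : Continuous f) (hC : 0 ≤ C)
    (hfb : ∀ x, |f x| ≤ C * (1 + |x| ^ k)) {t : ℝ} (ht : 0 < t) (x₀ : ℝ) :
    HasDerivAt (fun x => ∫ y, (-((x - y) / t) * heatKernel t (x - y)) * f y)
      (∫ y, (((x₀ - y) ^ 2 / t ^ 2 - 1 / t) * heatKernel t (x₀ - y)) * f y) x₀ := by
  set M := |x₀| + 1 with hMdef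
  have hM : ∀ x ∈ Metric.ball x₀ (1:ℝ), |x| ≤ M := by
    intro x hx
    have h := mem_ball_iff_norm.1 hx
    rw [Real.norm_eq_abs] at h
    calc |x| = |x₀ + (x - x₀)| := by congr 1; ring
      _ ≤ |x₀| + |x - x₀| := abs_add_le _ _
      _ ≤ M := by rw [hMdef]; linarith
  have hK : Continuous fun y : ℝ => heatKernel t (x₀ - y) :=
    (heatKernel_continuous t).comp (continuous_const.sub continuous_id)
  exact (hasDerivAt_integral_of_dominated_loc_of_deriv_le
    (F := fun x y => (-((x - y) / t) * heatKernel t (x - y)) * f y)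
    (F' := fun x y => (((x - y) ^ 2 / t ^ 2 - 1 / t) * heatKernel t (x - y)) * f y)
    (bound := fun y => ((4 * (1 + M) ^ 2 / t ^ 2 + 2 / t) * (Real.sqrt (2 * Real.pi * t))⁻¹ *
      Real.exp (M ^ 2 / t) * (2 * C)) *
      ((1 + |y|) ^ (k + 2) * Real.exp (-(1 / (6 * t)) * y ^ 2)))
    (Metric.ball_mem_nhds x₀ one_pos)
    (Filter.Eventually.of_forall fun x => Continuous.aestronglyMeasurable
      ((((continuous_const.sub continuous_id).div_const t).neg.mul
        ((heatKernel_continuous t).comp (continuous_const.sub continuous_id))).mul hf))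
    (prop1 hf hC hfb ht x₀).1
    (Continuous.aestronglyMeasurable
      ((((((continuous_const.sub continuous_id).pow 2).div_const (t ^ 2)).sub
        continuous_const).mul hK).mul hf))
    (Filter.Eventually.of_forall fun y => fun x hx => by
      have hxM := hM x hx
      rw [Real.norm_eq_abs, abs_mul, abs_mul, abs_of_pos (heatKernel_pos ht _)]
      unfold heatKernel
      calc |(x - y) ^ 2 / t ^ 2 - 1 / t| *
            ((Real.sqrt (2 * Real.pi * t))⁻¹ * Real.exp (-(x - y) ^ 2 / (2 * t))) * |f y|
          ≤ ((4 * (1 + M) ^ 2 / t ^ 2 + 2 / t) * (1 + |y|) ^ 2) *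
              ((Real.sqrt (2 * Real.pi * t))⁻¹ *
                (Real.exp (M ^ 2 / t) * Real.exp (-(1 / (6 * t)) * y ^ 2))) *
              (2 * C * (1 + |y|) ^ k) := by
            gcongr
            · exact coeff_bound ht (by linarith) (by linarith) hxM
            · exact exp_kernel_bound ht (by linarith) (by linarith) hxM
            · exact poly_f_bound hC hfb y
        _ = _ := by ring)
    (((integrable_one_add_abs_pow_mul_exp (by positivity : (0:ℝ) < 1/(6*t)) (k+2)).const_mul _))
    (Filter.Eventually.of_forall fun y => fun x hx => by
      have h := ((hasDerivAt_heatKernel_space2 ht (x - y)).comp x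
        ((hasDerivAt_id x).sub_const y)).mul_const (f y)
      simpa using h)).2

lemma prop3 (hf : Continuous f) (hC : 0 ≤ C)
    (hfb : ∀ x, |f x| ≤ C * (1 + |x| ^ k)) {t : ℝ} (ht : 0 < t) (x : ℝ) :
    HasDerivAt (fun τ => heatSemigroup τ f x)
      (∫ y, ((1 / 2) * (((x - y) ^ 2 / t ^ 2 - 1 / t) * heatKernel t (x - y))) * f y) t := by
  have hK : Continuous fun y : ℝ => heatKernel t (x - y) :=
    (heatKernel_continuous t).comp (continuous_const.sub continuous_id)
  simp only [heatSemigroup]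
  exact (hasDerivAt_integral_of_dominated_loc_of_deriv_le
    (F := fun τ y => heatKernel τ (x - y) * f y)
    (F' := fun τ y => ((1 / 2) * (((x - y) ^ 2 / τ ^ 2 - 1 / τ) * heatKernel τ (x - y))) * f y)
    (bound := fun y => (1 / 2 * ((4 * (1 + |x|) ^ 2 / t ^ 2 + 2 / t)) *
      (Real.sqrt (Real.pi * t))⁻¹ * Real.exp (|x| ^ 2 / t) * (2 * C)) *
      ((1 + |y|) ^ (k + 2) * Real.exp (-(1 / (6 * t)) * y ^ 2)))
    (Metric.ball_mem_nhds t (half_pos ht))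
    (Filter.Eventually.of_forall fun τ => Continuous.aestronglyMeasurable
      (((heatKernel_continuous τ).comp (continuous_const.sub continuous_id)).mul hf))
    (integrable_kernel_mul hf hC hfb ht x)
    (Continuous.aestronglyMeasurable
      ((continuous_const.mul ((((((continuous_const.sub continuous_id).pow 2).div_const
        (t ^ 2)).sub continuous_const)).mul hK)).mul hf))
    (Filter.Eventually.of_forall fun y => fun τ hτ => by
      have h := mem_ball_iff_norm.1 hτ
      rw [Real.norm_eq_abs, abs_lt] at h
      have hτ1 : t / 2 ≤ τ := by linarith
      have hτ2 : τ ≤ 3 * t / 2 := by linarith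
      have hτ0 : 0 < τ := by linarith
      rw [Real.norm_eq_abs, abs_mul, abs_mul, abs_mul,
        abs_of_pos (heatKernel_pos hτ0 _), abs_of_pos (show (0:ℝ) < 1/2 by norm_num)]
      unfold heatKernel
      calc 1 / 2 * (|(x - y) ^ 2 / τ ^ 2 - 1 / τ| *
            ((Real.sqrt (2 * Real.pi * τ))⁻¹ * Real.exp (-(x - y) ^ 2 / (2 * τ)))) * |f y|
          ≤ 1 / 2 * (((4 * (1 + |x|) ^ 2 / t ^ 2 + 2 / t) * (1 + |y|) ^ 2) *
              ((Real.sqrt (Real.pi * t))⁻¹ *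
                (Real.exp (|x| ^ 2 / t) * Real.exp (-(1 / (6 * t)) * y ^ 2)))) *
              (2 * C * (1 + |y|) ^ k) := by
            gcongr 1 / 2 * (?_ * (?_ * ?_)) * ?_
            · exact coeff_bound ht hτ1 hτ2 le_rfl
            · exact sqrt_inv_bound ht hτ1
            · exact exp_kernel_bound ht hτ1 hτ2 le_rfl
            · exact poly_f_bound hC hfb y
        _ = _ := by ring)
    (((integrable_one_add_abs_pow_mul_exp (by positivity : (0:ℝ) < 1/(6*t)) (k+2)).const_mul _))
    (Filter.Eventually.of_forall fun y => fun τ hτ => by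
      have h := mem_ball_iff_norm.1 hτ
      rw [Real.norm_eq_abs, abs_lt] at h
      have hτ0 : 0 < τ := by linarith
      exact (hasDerivAt_heatKernel_time hτ0 (x - y)).mul_const (f y))).2

end Main2

/-- `u(t,x) = P_t f(x)` solves the heat equation `∂u/∂t = (1/2) ∂²u/∂x²`:
the space function is twice differentiable and the time derivative exists and
equals half the second space derivative. -/
theorem heatSemigroup_solves_heat_equation
    (f : ℝ → ℝ) (hf : Continuous f) (hpg : PolyGrowth f) :
    ∀ t : ℝ, 0 < t → ∀ x : ℝ,
      DifferentiableAt ℝ (fun y => heatSemigroup t f y) x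
      ∧ DifferentiableAt ℝ (deriv (fun y => heatSemigroup t f y)) x
      ∧ HasDerivAt (fun τ => heatSemigroup τ f x)
          ((1 / 2) * deriv (deriv (fun y => heatSemigroup t f y)) x) t := by
  obtain ⟨C, k, hC, hfb⟩ := hpg
  intro t ht x
  have hd1 : ∀ x' : ℝ, HasDerivAt (fun x => heatSemigroup t f x)
      (∫ y, (-((x' - y) / t) * heatKernel t (x' - y)) * f y) x' :=
    fun x' => (prop1 hf hC hfb ht x').2
  have hderiv : deriv (fun y => heatSemigroup t f y) =
      fun x' => ∫ y, (-((x' - y) / t) * heatKernel t (x' - y)) * f y :=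
    funext fun x' => (hd1 x').deriv
  refine ⟨(hd1 x).differentiableAt, ?_, ?_⟩
  · rw [hderiv]
    exact (prop2 hf hC hfb ht x).differentiableAt
  · have h2 : deriv (deriv (fun y => heatSemigroup t f y)) x =
        ∫ y, (((x - y) ^ 2 / t ^ 2 - 1 / t) * heatKernel t (x - y)) * f y := by
      rw [hderiv]
      exact (prop2 hf hC hfb ht x).deriv
    rw [h2]
    have h3 := prop3 hf hC hfb ht x
    have he : (∫ y, ((1 / 2) * (((x - y) ^ 2 / t ^ 2 - 1 / t) * heatKernel t (x - y))) * f y)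
        = (1 / 2) * ∫ y, (((x - y) ^ 2 / t ^ 2 - 1 / t) * heatKernel t (x - y)) * f y := by
      rw [← MeasureTheory.integral_const_mul]
      congr 1
      ext y
      ring
    rwa [he] at h3
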